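/- For every rooted tree G and every depth-first expanding search σ of G, the expected payoff against the tree hiding strategy satisfies P(h_G, σ) = V_G. -/

import Mathlib

/-- A rooted tree with vertex probabilities: a single vertex, a root with one branch,
or a root with two branches. -/
inductive RTree : Type
  | leaf (p : ℝ) : RTree
  | node1 (p : ℝ) (G' : RTree) : RTree
  | node2 (p : ℝ) (G₁ G₂ : RTree) : RTree

namespace RTree

/-- Validity of the probabilities: every leaf has probability in `(0,1)`, and every
internal vertex (including the root) has probability in `(0,1]`. -/
def valid : RTree → Prop
  | leaf p => 0 < p ∧ p < 1
  | node1 p G' => (0 < p ∧ p ≤ 1) ∧ valid G'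
  | node2 p G₁ G₂ => (0 < p ∧ p ≤ 1) ∧ valid G₁ ∧ valid G₂

/-- `π(G)`, the product of the probabilities of all vertices of `G`. -/
def piT : RTree → ℝ
  | leaf p => p
  | node1 p G' => p * piT G'
  | node2 p G₁ G₂ => p * (piT G₁ * piT G₂)

/-- The recursively defined value `V_G` of the game on `G`. -/
noncomputable def valT : RTree → ℝ
  | leaf p => p
  | node1 p G' => p * valT G'
  | node2 p G₁ G₂ =>
      p * (((1 - piT G₁) / valT G₁ + (1 - piT G₂) / valT G₂)⁻¹) * (1 - piT G₁ * piT G₂)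

/-- The normalizing factor `λ` for a branch vertex with branches `G₁` and `G₂`. -/
noncomputable def lamT (G₁ G₂ : RTree) : ℝ :=
  ((1 - piT G₁) / valT G₁ + (1 - piT G₂) / valT G₂)⁻¹


/-- Vertices of a rooted tree, as addresses: the root is `[]`, and the address of a
vertex in a branch is the branch direction (`false` for the first/unique branch,
`true` for the second) followed by its address within the branch. -/
def verts : RTree → List (List Bool)
  | leaf _ => [[]]
  | node1 _ G' => [] :: (verts G').map (List.cons false)
  | node2 _ G₁ G₂ => [] :: ((verts G₁).map (List.cons false) ++ (verts G₂).map (List.cons true))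

/-- The success probability of the vertex at a given address. -/
def pAt : RTree → List Bool → ℝ
  | leaf p, _ => p
  | node1 p _, [] => p
  | node1 _ G', _ :: l => pAt G' l
  | node2 p _ _, [] => p
  | node2 _ G₁ _, false :: l => pAt G₁ l
  | node2 _ _ G₂, true :: l => pAt G₂ l

/-- The subtree `G(v)` rooted at the vertex with address `v` (if it exists). -/
def sub? : RTree → List Bool → Option RTree
  | t, [] => some t
  | leaf _, _ :: _ => none
  | node1 _ G', false :: l => sub? G' l
  | node1 _ _, true :: _ => none
  | node2 _ G₁ _, false :: l => sub? G₁ l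
  | node2 _ _ G₂, true :: l => sub? G₂ l

/-- The tree hiding strategy `h_G`, as a function assigning probabilities to addresses. -/
noncomputable def hide : RTree → List Bool → ℝ
  | leaf _, [] => 1
  | leaf _, _ :: _ => 0
  | node1 _ _, [] => 0
  | node1 _ G', false :: l => hide G' l
  | node1 _ _, true :: _ => 0
  | node2 _ _ _, [] => 0
  | node2 _ G₁ G₂, false :: l => lamT G₁ G₂ * ((1 - piT G₁) / valT G₁) * hide G₁ l
  | node2 _ G₁ G₂, true :: l => lamT G₁ G₂ * ((1 - piT G₂) / valT G₂) * hide G₂ l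

/-- An expanding search of `G`: an ordering of all of the vertices of `G` in which every
vertex other than the root appears after its parent (hence the root `[]` comes first). -/
def IsSearch (G : RTree) (σ : List (List Bool)) : Prop :=
  σ.Perm (verts G) ∧ ∀ a ∈ σ, a ≠ [] → σ.idxOf a.dropLast < σ.idxOf a

/-- A depth-first expanding search: for every vertex `v`, the vertices of the subtree
`G(v)` occupy consecutive positions beginning with `v`;  equivalently, any vertex `w`
appearing between `v` and a descendant of `v` is itself a descendant of `v`. -/
def IsDFS (G : RTree) (σ : List (List Bool)) : Prop :=
  IsSearch G σ ∧ ∀ v a w, v ∈ σ → a ∈ σ → w ∈ σ → v <+: a →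
    σ.idxOf v ≤ σ.idxOf w → σ.idxOf w ≤ σ.idxOf a → v <+: w

/-- `P(v,σ)`: the probability of reaching and successfully searching vertex `v`,
i.e. the product of `p` over the locations searched up to and including `v`. -/
def capProb (G : RTree) (σ : List (List Bool)) (v : List Bool) : ℝ :=
  ((σ.take (σ.idxOf v + 1)).map (pAt G)).prod

/-- `P(x,σ) = Σ_v x(v) P(v,σ)` for a distribution `x` on the vertices. -/
def payoffD (G : RTree) (x : List Bool → ℝ) (σ : List (List Bool)) : ℝ :=
  (σ.map (fun v => x v * capProb G σ v)).sum

end RTree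

namespace RTree
open List

section IndexOf
variable {α : Type*} [BEq α] [LawfulBEq α]

lemma idx_cons_self (a : α) (l : List α) : idxOf a (a :: l) = 0 := by
  simp [List.idxOf, findIdx_cons]

lemma idx_cons_ne {a x : α} (l : List α) (h : a ≠ x) :
    idxOf x (a :: l) = idxOf x l + 1 := by
  simp [List.idxOf, findIdx_cons, beq_eq_false_iff_ne.mpr h]

lemma idx_append_left {x : α} {l₁ : List α} (l₂ : List α) (h : x ∈ l₁) :
    idxOf x (l₁ ++ l₂) = idxOf x l₁ := by
  induction l₁ with
  | nil => simp at h
  | cons a t ih =>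
    by_cases hax : a = x
    · subst hax; rw [cons_append, idx_cons_self, idx_cons_self]
    · rw [cons_append, idx_cons_ne _ hax, idx_cons_ne _ hax,
        ih (by rcases mem_cons.mp h with h | h; exacts [absurd h.symm hax, h])]

lemma idx_append_right {x : α} {l₁ : List α} (l₂ : List α) (h : x ∉ l₁) :
    idxOf x (l₁ ++ l₂) = l₁.length + idxOf x l₂ := by
  induction l₁ with
  | nil => simp
  | cons a t ih =>
    rw [cons_append, idx_cons_ne _ (fun e => h (by rw [e]; exact mem_cons_self)),
      ih (fun hx => h (mem_cons_of_mem a hx)), length_cons]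
    omega

end IndexOf

end RTree

namespace RTree
open List

lemma indexOf_map_cons (b : Bool) (x : List Bool) (l : List (List Bool)) :
    (l.map (List.cons b)).idxOf (b :: x) = l.idxOf x := by
  induction l with
  | nil => simp
  | cons a t ih =>
    by_cases h : a = x
    · subst h; rw [map_cons, idx_cons_self, idx_cons_self]
    · rw [map_cons, idx_cons_ne _ (show (b :: a) ≠ (b :: x) by simp [h]),
        idx_cons_ne _ h, ih]

lemma nil_mem_verts (G : RTree) : [] ∈ verts G := by
  cases G <;> simp [verts]

lemma dropLast_mem_verts : ∀ (G : RTree) (a : List Bool), a ∈ verts G → a ≠ [] →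
    a.dropLast ∈ verts G := by
  intro G
  induction G with
  | leaf p => intro a ha hna; simp [verts] at ha; exact absurd ha hna
  | node1 p G' ih =>
    intro a ha hna
    simp only [verts, mem_cons, mem_map] at ha ⊢
    rcases ha with rfl | ⟨l, hl, rfl⟩
    · exact absurd rfl hna
    · rcases eq_or_ne l [] with rfl | hl0
      · left; simp
      · right; exact ⟨l.dropLast, ih l hl hl0, (dropLast_cons_of_ne_nil hl0).symm⟩
  | node2 p G₁ G₂ ih₁ ih₂ =>
    intro a ha hna
    simp only [verts, mem_cons, mem_append, mem_map] at ha ⊢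
    rcases ha with rfl | ⟨l, hl, rfl⟩ | ⟨l, hl, rfl⟩
    · exact absurd rfl hna
    · rcases eq_or_ne l [] with rfl | hl0
      · left; simp
      · right; left; exact ⟨l.dropLast, ih₁ l hl hl0, (dropLast_cons_of_ne_nil hl0).symm⟩
    · rcases eq_or_ne l [] with rfl | hl0
      · left; simp
      · right; right; exact ⟨l.dropLast, ih₂ l hl hl0, (dropLast_cons_of_ne_nil hl0).symm⟩

lemma verts_nodup : ∀ (G : RTree), (verts G).Nodup := by
  intro G
  induction G with
  | leaf p => simp [verts]
  | node1 p G' ih =>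
    simp only [verts, nodup_cons]
    refine ⟨by simp, ?_⟩
    exact (nodup_map_iff (fun a b h => by injection h)).mpr ih
  | node2 p G₁ G₂ ih₁ ih₂ =>
    simp only [verts, nodup_cons, nodup_append]
    refine ⟨by simp, ?_, ?_, ?_⟩
    · exact (nodup_map_iff (fun a b h => by injection h)).mpr ih₁
    · exact (nodup_map_iff (fun a b h => by injection h)).mpr ih₂
    · intro x hx1 y hx2
      simp only [mem_map] at hx1 hx2
      obtain ⟨l1, _, rfl⟩ := hx1
      obtain ⟨l2, _, rfl⟩ := hx2
      simp

end RTree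

namespace RTree
open List

lemma prod_map_pAt_verts : ∀ (G : RTree), ((verts G).map (pAt G)).prod = piT G := by
  intro G
  induction G with
  | leaf p => simp [verts, pAt, piT]
  | node1 p G' ih =>
    have hc : (fun l => pAt (node1 p G') (false :: l)) = pAt G' := by
      funext l; rfl
    simp only [verts, map_cons, map_map, prod_cons, piT]
    rw [show (pAt (node1 p G') ∘ List.cons false) = pAt G' from hc, ih]
    rfl
  | node2 p G₁ G₂ ih₁ ih₂ =>
    have hc₁ : (pAt (node2 p G₁ G₂) ∘ List.cons false) = pAt G₁ := by funext l; rfl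
    have hc₂ : (pAt (node2 p G₁ G₂) ∘ List.cons true) = pAt G₂ := by funext l; rfl
    simp only [verts, map_cons, map_append, map_map, prod_cons, prod_append, piT]
    rw [hc₁, hc₂, ih₁, ih₂]
    rfl

lemma prod_map_pAt_perm (G : RTree) (τ : List (List Bool)) (h : τ.Perm (verts G)) :
    (τ.map (pAt G)).prod = piT G := by
  rw [(h.map (pAt G)).prod_eq, prod_map_pAt_verts]

lemma payoffD_nil (G : RTree) (x : List Bool → ℝ) : payoffD G x [] = 0 := rfl

lemma capProb_cons_self (G : RTree) (a : List Bool) (σ : List (List Bool)) :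
    capProb G (a :: σ) a = pAt G a := by
  unfold capProb
  rw [idx_cons_self, take_succ_cons, take_zero, map_cons, map_nil, prod_cons, prod_nil, mul_one]

lemma payoffD_cons (G : RTree) (x : List Bool → ℝ) (a : List Bool) (σ' : List (List Bool))
    (h : a ∉ σ') :
    payoffD G x (a :: σ') = pAt G a * x a + pAt G a * payoffD G x σ' := by
  unfold payoffD
  rw [map_cons, sum_cons, capProb_cons_self]
  have h2 : ∀ v ∈ σ', x v * capProb G (a :: σ') v = pAt G a * (x v * capProb G σ' v) := by
    intro v hv
    have hvne : a ≠ v := fun e => h (e ▸ hv)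
    have hcap : capProb G (a :: σ') v = pAt G a * capProb G σ' v := by
      unfold capProb
      rw [idx_cons_ne _ hvne, take_succ_cons, map_cons, prod_cons]
    rw [hcap]; ring
  rw [map_congr_left h2, sum_map_mul_left]
  ring

lemma payoffD_append (G : RTree) (x : List Bool → ℝ) (A B : List (List Bool))
    (h : (A ++ B).Nodup) :
    payoffD G x (A ++ B) = payoffD G x A + (A.map (pAt G)).prod * payoffD G x B := by
  induction A with
  | nil => simp [payoffD_nil]
  | cons a A ih =>
    rw [cons_append] at h ⊢
    obtain ⟨ha, hAB⟩ := nodup_cons.mp h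
    rw [payoffD_cons _ _ _ _ ha, payoffD_cons _ _ _ _ (fun hx => ha (mem_append_left _ hx)),
      ih hAB, map_cons, prod_cons]
    ring

lemma payoffD_map (G G' : RTree) (b : Bool) (hp : ∀ l, pAt G (b :: l) = pAt G' l)
    (x : List Bool → ℝ) (τ : List (List Bool)) (hτ : τ.Nodup) :
    payoffD G x (τ.map (List.cons b)) = payoffD G' (fun l => x (b :: l)) τ := by
  induction τ with
  | nil => simp [payoffD_nil]
  | cons a t ih =>
    obtain ⟨ha, ht⟩ := nodup_cons.mp hτ
    rw [map_cons, payoffD_cons _ _ _ _ (fun hx => ha (by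
      obtain ⟨l, hl, he⟩ := mem_map.mp hx
      injection he with h1 h2
      exact h2 ▸ hl)),
      payoffD_cons _ _ _ _ ha, ih ht, hp]

lemma payoffD_smul (G : RTree) (c : ℝ) (x : List Bool → ℝ) (σ : List (List Bool)) :
    payoffD G (fun v => c * x v) σ = c * payoffD G x σ := by
  unfold payoffD
  rw [← sum_map_mul_left σ (fun v => x v * capProb G σ v) c]
  congr 1
  apply map_congr_left
  intro v _
  ring

lemma piT_mem (G : RTree) (h : valid G) : 0 < piT G ∧ piT G < 1 := by
  induction G with
  | leaf p => exact h
  | node1 p G' ih =>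
    obtain ⟨⟨hp0, hp1⟩, hv⟩ := h
    obtain ⟨h0, h1⟩ := ih hv
    simp only [piT]
    constructor
    · exact mul_pos hp0 h0
    · nlinarith
  | node2 p G₁ G₂ ih₁ ih₂ =>
    obtain ⟨⟨hp0, hp1⟩, hv₁, hv₂⟩ := h
    obtain ⟨h10, h11⟩ := ih₁ hv₁
    obtain ⟨h20, h21⟩ := ih₂ hv₂
    simp only [piT]
    constructor
    · exact mul_pos hp0 (mul_pos h10 h20)
    · nlinarith [mul_pos h10 h20, mul_lt_of_lt_one_left h20 h11]

lemma valT_pos (G : RTree) (h : valid G) : 0 < valT G := by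
  induction G with
  | leaf p => exact h.1
  | node1 p G' ih => exact mul_pos h.1.1 (ih h.2)
  | node2 p G₁ G₂ ih₁ ih₂ =>
    obtain ⟨⟨hp0, hp1⟩, hv₁, hv₂⟩ := h
    obtain ⟨h10, h11⟩ := piT_mem G₁ hv₁
    obtain ⟨h20, h21⟩ := piT_mem G₂ hv₂
    have hV₁ := ih₁ hv₁
    have hV₂ := ih₂ hv₂
    have hs : 0 < (1 - piT G₁) / valT G₁ + (1 - piT G₂) / valT G₂ := by
      have := div_pos (by linarith : (0:ℝ) < 1 - piT G₁) hV₁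
      have := div_pos (by linarith : (0:ℝ) < 1 - piT G₂) hV₂
      linarith
    show 0 < _ * _ * _
    apply mul_pos (mul_pos hp0 (inv_pos.mpr hs))
    nlinarith

end RTree

namespace RTree
open List

lemma search_root (G : RTree) (σ : List (List Bool)) (h : IsSearch G σ) :
    ∃ σ', σ = [] :: σ' ∧ [] ∉ σ' := by
  obtain ⟨hperm, hord⟩ := h
  have hnd : σ.Nodup := hperm.symm.nodup (verts_nodup G)
  have hmem : ([] : List Bool) ∈ σ := hperm.mem_iff.mpr (nil_mem_verts G)
  have key : ∀ n (a : List Bool), a.length ≤ n → a ∈ σ →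
      σ.idxOf ([] : List Bool) ≤ σ.idxOf a := by
    intro n
    induction n with
    | zero =>
      intro a ha _
      have : a = [] := length_eq_zero_iff.mp (Nat.le_antisymm ha (Nat.zero_le _))
      subst this; exact le_rfl
    | succ n ih =>
      intro a ha hma
      rcases eq_or_ne a [] with rfl | hne
      · exact le_rfl
      · have h1 := hord a hma hne
        have h2 : a.dropLast ∈ σ :=
          hperm.mem_iff.mpr (dropLast_mem_verts G a (hperm.subset hma) hne)
        have h3 := ih a.dropLast (by rw [length_dropLast]; omega) h2
        omega
  cases σ with
  | nil => simp at hmem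
  | cons h0 t =>
    have hle : idxOf ([] : List Bool) (h0 :: t) ≤ idxOf h0 (h0 :: t) :=
      key h0.length h0 le_rfl (mem_cons_self)
    rw [idx_cons_self] at hle
    have h0eq : h0 = [] := by
      by_contra hne
      rw [idx_cons_ne _ hne] at hle
      omega
    subst h0eq
    exact ⟨t, rfl, (nodup_cons.mp hnd).1⟩

lemma second_elem (G : RTree) (h1 : List Bool) (rest : List (List Bool))
    (h : IsSearch G ([] :: h1 :: rest)) (hnil : h1 ≠ []) :
    ∃ b : Bool, h1 = [b] := by
  obtain ⟨hperm, hord⟩ := h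
  obtain ⟨b, l, rfl⟩ : ∃ b l, h1 = b :: l := by
    cases h1 with
    | nil => exact absurd rfl hnil
    | cons b l => exact ⟨b, l, rfl⟩
  have hidx : idxOf (b :: l) ([] :: (b :: l) :: rest) = 1 := by
    rw [idx_cons_ne _ (Ne.symm hnil), idx_cons_self]
  have hlt := hord (b :: l) (by simp) hnil
  rw [hidx] at hlt
  have hdl : (b :: l).dropLast = [] := by
    by_contra hne
    rw [idx_cons_ne _ (Ne.symm hne)] at hlt
    omega
  cases l with
  | nil => exact ⟨b, rfl⟩
  | cons c t =>
    rw [dropLast_cons_of_ne_nil (cons_ne_nil c t)] at hdl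
    exact absurd hdl (cons_ne_nil _ _)

lemma isDFS_shift (G Gb : RTree) (b : Bool) (pre post τ : List (List Bool))
    (hd : IsDFS G (pre ++ τ.map (List.cons b) ++ post))
    (hperm : τ.Perm (verts Gb))
    (hpre : ∀ l, (b :: l) ∉ pre) :
    IsDFS Gb τ := by
  set σ : List (List Bool) := pre ++ τ.map (List.cons b) ++ post with hσ
  have hmem : ∀ x ∈ τ, (b :: x) ∈ σ := by
    intro x hx
    exact mem_append_left _ (mem_append_right _ (mem_map_of_mem (f := List.cons b) hx))
  have hidx : ∀ x ∈ τ, σ.idxOf (b :: x) = pre.length + τ.idxOf x := by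
    intro x hx
    rw [hσ, append_assoc, idx_append_right _ (hpre x),
      idx_append_left _ (mem_map_of_mem (f := List.cons b) hx), indexOf_map_cons]
  obtain ⟨⟨_, hord⟩, hdfs⟩ := hd
  refine ⟨⟨hperm, ?_⟩, ?_⟩
  · intro a ha hane
    have hdm : a.dropLast ∈ τ :=
      hperm.mem_iff.mpr (dropLast_mem_verts Gb a (hperm.subset ha) hane)
    have h1 := hord (b :: a) (hmem a ha) (cons_ne_nil _ _)
    rw [dropLast_cons_of_ne_nil hane, hidx _ hdm, hidx _ ha] at h1
    omega
  · intro v a w hv ha hw hpref hvw hwa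
    have h1 := hdfs (b :: v) (b :: a) (b :: w) (hmem v hv) (hmem a ha) (hmem w hw)
      (cons_prefix_cons.mpr ⟨rfl, hpref⟩)
      (by rw [hidx _ hv, hidx _ hw]; omega)
      (by rw [hidx _ hw, hidx _ ha]; omega)
    exact (cons_prefix_cons.mp h1).2

lemma eq_map_cons_of_head (b : Bool) : ∀ (L : List (List Bool)),
    (∀ x ∈ L, x.head? = some b) → L = (L.map List.tail).map (List.cons b) := by
  intro L
  induction L with
  | nil => intro _; rfl
  | cons a t ih =>
    intro h
    have ha := h a (mem_cons_self)
    cases a with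
    | nil => simp at ha
    | cons c l =>
      have : c = b := by simpa using ha
      subst this
      rw [map_cons, map_cons, tail_cons, ← ih (fun x hx => h x (mem_cons_of_mem _ hx))]

lemma filter_head_map_same (b : Bool) (V : List (List Bool)) :
    (V.map (List.cons b)).filter (fun y => y.head? == some b) = V.map (List.cons b) := by
  rw [filter_eq_self]
  intro a ha
  obtain ⟨l, _, rfl⟩ := mem_map.mp ha
  simp

lemma filter_head_map_ne (b c : Bool) (h : b ≠ c) (V : List (List Bool)) :
    (V.map (List.cons c)).filter (fun y => y.head? == some b) = [] := by
  rw [filter_eq_nil_iff]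
  intro a ha
  obtain ⟨l, _, rfl⟩ := mem_map.mp ha
  simp [Ne.symm h]

lemma dfs_block (G : RTree) (σ' : List (List Bool)) (b : Bool) (rest : List (List Bool))
    (hσ' : σ' = [b] :: rest)
    (hnodup : (([] : List Bool) :: σ').Nodup)
    (hdfs : ∀ v a w, v ∈ ([] :: σ') → a ∈ ([] :: σ') → w ∈ ([] :: σ') → v <+: a →
      (([] : List Bool) :: σ').idxOf v ≤ (([] : List Bool) :: σ').idxOf w →
      (([] : List Bool) :: σ').idxOf w ≤ (([] : List Bool) :: σ').idxOf a → v <+: w) :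
    ∀ x ∈ σ'.dropWhile (fun y => y.head? == some b), x.head? ≠ some b := by
  intro f hf hfb
  set P : List Bool → Bool := fun y => y.head? == some b with hP
  set A := σ'.takeWhile P with hA
  set B := σ'.dropWhile P with hB
  have hAB : A ++ B = σ' := takeWhile_append_dropWhile (p := P) (l := σ')
  have hnil : ([] : List Bool) ∉ σ' := (nodup_cons.mp hnodup).1
  have hndσ' : σ'.Nodup := (nodup_cons.mp hnodup).2
  -- B is nonempty, with head t
  obtain ⟨t, B', hBt⟩ : ∃ t B', B = t :: B' := by
    cases hBt : B with
    | nil => rw [hBt] at hf; simp at hf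
    | cons t B' => exact ⟨t, B', rfl⟩
  have htP : P t = false := by
    have := head?_dropWhile_not P σ'
    rw [← hB, hBt] at this
    simpa using this
  -- memberships
  have hfσ' : f ∈ σ' := by rw [← hAB]; exact mem_append_right _ hf
  have htσ' : t ∈ σ' := by rw [← hAB, hBt]; exact mem_append_right _ (mem_cons_self)
  have hbσ' : ([b] : List Bool) ∈ σ' := by rw [hσ']; exact mem_cons_self
  -- disjointness
  have hdisj : ∀ x ∈ B, x ∉ A := by
    intro x hxB hxA
    have := (nodup_append.mp (hAB ▸ hndσ' : (A ++ B).Nodup)).2.2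
    exact this x hxA x hxB rfl
  -- indices
  have hf_ne_nil : f ≠ [] := fun e => hnil (e ▸ hfσ')
  have ht_ne_nil : t ≠ [] := fun e => hnil (e ▸ htσ')
  have hidxb : (([] : List Bool) :: σ').idxOf [b] = 1 := by
    rw [hσ', idx_cons_ne _ (fun e => (cons_ne_nil b []) e.symm), idx_cons_self]
  have hidxt : (([] : List Bool) :: σ').idxOf t = A.length + 1 := by
    have : (([] : List Bool) :: σ') = (([] : List Bool) :: A) ++ B := by
      rw [cons_append, hAB]
    rw [this, idx_append_right _ (by
      intro hx
      rcases mem_cons.mp hx with e | hxA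
      · exact ht_ne_nil e
      · exact hdisj t (hBt ▸ (mem_cons_self (a := t) (l := B'))) hxA), hBt, idx_cons_self]
    simp [Nat.add_comm]
  have hidxf : A.length + 1 ≤ (([] : List Bool) :: σ').idxOf f := by
    have : (([] : List Bool) :: σ') = (([] : List Bool) :: A) ++ B := by
      rw [cons_append, hAB]
    rw [this, idx_append_right _ (by
      intro hx
      rcases mem_cons.mp hx with e | hxA
      · exact hf_ne_nil e
      · exact hdisj f hf hxA)]
    simp only [length_cons]
    omega
  -- f starts with b
  obtain ⟨lf, rfl⟩ : ∃ lf, f = b :: lf := by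
    cases f with
    | nil => exact absurd rfl hf_ne_nil
    | cons c lf =>
      have : c = b := by simpa using hfb
      exact ⟨lf, by rw [this]⟩
  -- apply DFS property
  have hres := hdfs [b] (b :: lf) t
    (mem_cons_of_mem _ hbσ') (mem_cons_of_mem _ hfσ') (mem_cons_of_mem _ htσ')
    (cons_prefix_cons.mpr ⟨rfl, nil_prefix⟩)
    (by rw [hidxb, hidxt]; omega)
    (by rw [hidxt]; omega)
  -- contradiction: t would start with b
  obtain ⟨c, lt, rfl⟩ : ∃ c lt, t = c :: lt := by
    cases t with
    | nil => exact absurd rfl ht_ne_nil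
    | cons c lt => exact ⟨c, lt, rfl⟩
  have : b = c := (cons_prefix_cons.mp hres).1
  subst this
  simp [hP] at htP

end RTree

namespace RTree
open List

lemma node1_decomp (p : ℝ) (G' : RTree) (σ : List (List Bool))
    (hd : IsDFS (node1 p G') σ) :
    ∃ τ, σ = [] :: τ.map (List.cons false) ∧ IsDFS G' τ := by
  obtain ⟨σ', rfl, hnil⟩ := search_root _ σ hd.1
  have hperm' : σ'.Perm ((verts G').map (List.cons false)) := by
    have h := hd.1.1
    exact h.cons_inv
  have hall : ∀ x ∈ σ', x.head? = some false := by
    intro x hx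
    obtain ⟨l, _, rfl⟩ := mem_map.mp (hperm'.subset hx)
    rfl
  have hτeq : σ' = (σ'.map List.tail).map (List.cons false) :=
    eq_map_cons_of_head false σ' hall
  set τ := σ'.map List.tail with hτ
  have hτperm : τ.Perm (verts G') := by
    have h2 := hperm'.map List.tail
    rw [map_map, show (List.tail ∘ List.cons false) = id from rfl, map_id] at h2
    exact h2
  refine ⟨τ, by rw [← hτeq], ?_⟩
  have hshape : ([([] : List Bool)] ++ τ.map (List.cons false) ++ ([] : List (List Bool)))
      = [] :: σ' := by
    rw [append_nil, singleton_append, ← hτeq]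
  exact isDFS_shift (node1 p G') G' false [[]] [] τ (hshape ▸ hd) hτperm
    (by intro l h; simp at h)

lemma node2_decomp (p : ℝ) (G₁ G₂ : RTree) (σ : List (List Bool))
    (hd : IsDFS (node2 p G₁ G₂) σ) :
    ∃ τ₁ τ₂, IsDFS G₁ τ₁ ∧ IsDFS G₂ τ₂ ∧
      (σ = [] :: (τ₁.map (List.cons false) ++ τ₂.map (List.cons true)) ∨
       σ = [] :: (τ₂.map (List.cons true) ++ τ₁.map (List.cons false))) := by
  obtain ⟨σ', rfl, hnil⟩ := search_root _ σ hd.1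
  have hperm' : σ'.Perm ((verts G₁).map (List.cons false) ++ (verts G₂).map (List.cons true)) := by
    have h := hd.1.1
    exact h.cons_inv
  have hnd : (([] : List Bool) :: σ').Nodup := (hd.1.1).symm.nodup (verts_nodup _)
  have hall : ∀ x ∈ σ', ∃ (c : Bool) (l : List Bool), x = c :: l := by
    intro x hx
    rcases mem_append.mp (hperm'.subset hx) with h | h
    · obtain ⟨l, _, rfl⟩ := mem_map.mp h; exact ⟨false, l, rfl⟩
    · obtain ⟨l, _, rfl⟩ := mem_map.mp h; exact ⟨true, l, rfl⟩
  obtain ⟨h1, rest, hσ'⟩ : ∃ h1 rest, σ' = h1 :: rest := by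
    cases hc : σ' with
    | nil =>
      exfalso
      have hfm : ([false] : List Bool) ∈ σ' := hperm'.mem_iff.mpr
        (mem_append_left _ (mem_map_of_mem (nil_mem_verts G₁)))
      rw [hc] at hfm; simp at hfm
    | cons h1 rest => exact ⟨h1, rest, rfl⟩
  have hh1 : h1 ∈ σ' := by rw [hσ']; exact mem_cons_self
  obtain ⟨b, hb⟩ := second_elem (node2 p G₁ G₂) h1 rest (by rw [← hσ']; exact hd.1)
    (fun e => hnil (e ▸ hh1))
  subst hb
  set P : List Bool → Bool := fun y => y.head? == some b with hP
  set A := σ'.takeWhile P with hA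
  set B := σ'.dropWhile P with hB
  have hAB : A ++ B = σ' := takeWhile_append_dropWhile (p := P) (l := σ')
  have hAhead : ∀ x ∈ A, x.head? = some b := by
    intro x hx
    have h := mem_takeWhile_imp hx
    simpa [hP] using h
  have hBhead : ∀ x ∈ B, x.head? = some (!b) := by
    intro x hx
    have hxσ' : x ∈ σ' := by rw [← hAB]; exact mem_append_right _ hx
    obtain ⟨c, l, rfl⟩ := hall x hxσ'
    have hne := dfs_block (node2 p G₁ G₂) σ' b rest hσ' hnd hd.2 (c :: l) hx
    have hcb : c ≠ b := fun e => hne (by rw [e]; rfl)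
    cases b <;> cases c <;> simp_all
  have hAeq : A = (A.map List.tail).map (List.cons b) := eq_map_cons_of_head b A hAhead
  have hBeq : B = (B.map List.tail).map (List.cons (!b)) := eq_map_cons_of_head (!b) B hBhead
  set τA := A.map List.tail with hτA
  set τB := B.map List.tail with hτB
  have hAfilter : σ'.filter P = A := by
    rw [← hAB, filter_append,
      filter_eq_self.mpr (fun x hx => by simp only [hP, hAhead x hx]; simp),
      filter_eq_nil_iff.mpr (fun x hx => by
        simp only [hP, hBhead x hx]; cases b <;> simp), append_nil]
  set Q : List Bool → Bool := fun y => y.head? == some (!b) with hQ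
  have hBfilter : σ'.filter Q = B := by
    rw [← hAB, filter_append,
      filter_eq_nil_iff.mpr (fun x hx => by
        simp only [hQ, hAhead x hx]; cases b <;> simp),
      filter_eq_self.mpr (fun x hx => by simp only [hQ, hBhead x hx]; simp), nil_append]
  have hpre₁ : ∀ l : List Bool, (b :: l) ∉ [([] : List Bool)] := by
    intro l h; simp at h
  have hpre₂ : ∀ l : List Bool, ((!b) :: l) ∉ (([] : List Bool) :: A) := by
    intro l h
    rcases mem_cons.mp h with e | hxA
    · exact (cons_ne_nil _ _) e
    · have := hAhead _ hxA
      simp at this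
  have hshape₁ : ([([] : List Bool)] ++ τA.map (List.cons b) ++ B) = [] :: σ' := by
    rw [← hAeq, singleton_append, cons_append, hAB]
  have hshape₂ : ((([] : List Bool) :: A) ++ τB.map (List.cons (!b)) ++ ([] : List (List Bool)))
      = [] :: σ' := by
    rw [append_nil, ← hBeq, cons_append, hAB]
  rcases b with _ | _
  · -- b = false: A-block belongs to G₁, B-block to G₂
    have hApm : A.Perm ((verts G₁).map (List.cons false)) := by
      have h := hperm'.filter P
      rw [hAfilter, hP, filter_append, filter_head_map_same,
        filter_head_map_ne false true (by decide)] at h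
      simpa using h
    have hBpm : B.Perm ((verts G₂).map (List.cons true)) := by
      have h := hperm'.filter Q
      rw [hBfilter, hQ] at h
      simp only [Bool.not_false] at h
      rw [filter_append, filter_head_map_ne true false (by decide),
        filter_head_map_same] at h
      simpa using h
    have hτApm : τA.Perm (verts G₁) := by
      have h2 := hApm.map List.tail
      rw [map_map, show (List.tail ∘ List.cons false) = id from rfl, map_id] at h2
      exact h2
    have hτBpm : τB.Perm (verts G₂) := by
      have h2 := hBpm.map List.tail
      rw [map_map, show (List.tail ∘ List.cons true) = id from rfl, map_id] at h2
      exact h2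
    refine ⟨τA, τB,
      isDFS_shift _ G₁ false [[]] B τA (hshape₁ ▸ hd) hτApm hpre₁,
      isDFS_shift _ G₂ true (([] : List Bool) :: A) [] τB
        (hshape₂ ▸ hd) hτBpm (by simpa using hpre₂), Or.inl ?_⟩
    rw [← hAeq]
    have : τB.map (List.cons true) = B := by rw [hBeq]; rfl
    rw [this, hAB]
  · -- b = true: A-block belongs to G₂, B-block to G₁
    have hApm : A.Perm ((verts G₂).map (List.cons true)) := by
      have h := hperm'.filter P
      rw [hAfilter, hP, filter_append, filter_head_map_ne true false (by decide),
        filter_head_map_same] at h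
      simpa using h
    have hBpm : B.Perm ((verts G₁).map (List.cons false)) := by
      have h := hperm'.filter Q
      rw [hBfilter, hQ] at h
      simp only [Bool.not_true] at h
      rw [filter_append, filter_head_map_same,
        filter_head_map_ne false true (by decide)] at h
      simpa using h
    have hτApm : τA.Perm (verts G₂) := by
      have h2 := hApm.map List.tail
      rw [map_map, show (List.tail ∘ List.cons true) = id from rfl, map_id] at h2
      exact h2
    have hτBpm : τB.Perm (verts G₁) := by
      have h2 := hBpm.map List.tail
      rw [map_map, show (List.tail ∘ List.cons false) = id from rfl, map_id] at h2
      exact h2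
    refine ⟨τB, τA,
      isDFS_shift _ G₁ false (([] : List Bool) :: A) [] τB
        (hshape₂ ▸ hd) hτBpm (by simpa using hpre₂),
      isDFS_shift _ G₂ true [[]] B τA (hshape₁ ▸ hd) hτApm hpre₁, Or.inr ?_⟩
    rw [← hAeq]
    have : τB.map (List.cons false) = B := by rw [hBeq]; rfl
    rw [this, hAB]

end RTree

namespace RTree
open List

lemma payoff_main : ∀ G : RTree, G.valid → ∀ σ, IsDFS G σ →
    payoffD G (hide G) σ = G.valT := by
  intro G
  induction G with
  | leaf p =>
    intro hG σ hσ
    have hs : σ = [[]] := by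
      have h := hσ.1.1
      simpa [verts] using h
    subst hs
    show (1 : ℝ) * capProb (leaf p) [[]] [] + 0 = p
    rw [capProb_cons_self]
    show 1 * p + 0 = p
    ring
  | node1 p G' ih =>
    intro hG σ hσ
    obtain ⟨τ, rfl, hτ⟩ := node1_decomp p G' σ hσ
    have hτnd : τ.Nodup := hτ.1.1.symm.nodup (verts_nodup G')
    have hnm : ([] : List Bool) ∉ τ.map (List.cons false) := by simp
    rw [payoffD_cons _ _ _ _ hnm,
      payoffD_map (node1 p G') G' false (fun l => rfl) _ τ hτnd]
    have e : (fun l => hide (node1 p G') (false :: l)) = hide G' := rfl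
    rw [e, ih hG.2 τ hτ]
    show p * 0 + p * valT G' = p * valT G'
    ring
  | node2 p G₁ G₂ ih₁ ih₂ =>
    intro hG σ hσ
    obtain ⟨⟨hp0, hp1⟩, hv₁, hv₂⟩ := hG
    obtain ⟨τ₁, τ₂, h₁, h₂, hcase⟩ := node2_decomp p G₁ G₂ σ hσ
    have hτ₁nd : τ₁.Nodup := h₁.1.1.symm.nodup (verts_nodup G₁)
    have hτ₂nd : τ₂.Nodup := h₂.1.1.symm.nodup (verts_nodup G₂)
    have hV₁ : valT G₁ ≠ 0 := ne_of_gt (valT_pos G₁ hv₁)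
    have hV₂ : valT G₂ ≠ 0 := ne_of_gt (valT_pos G₂ hv₂)
    have hnd : σ.Nodup := hσ.1.1.symm.nodup (verts_nodup _)
    have e₁ : (fun l => hide (node2 p G₁ G₂) (false :: l)) =
        (fun l => (lamT G₁ G₂ * ((1 - piT G₁) / valT G₁)) * hide G₁ l) := rfl
    have e₂ : (fun l => hide (node2 p G₁ G₂) (true :: l)) =
        (fun l => (lamT G₁ G₂ * ((1 - piT G₂) / valT G₂)) * hide G₂ l) := rfl
    have eprod₁ : ((τ₁.map (List.cons false)).map (pAt (node2 p G₁ G₂))).prod = piT G₁ := by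
      rw [map_map, show (pAt (node2 p G₁ G₂) ∘ List.cons false) = pAt G₁ from rfl]
      exact prod_map_pAt_perm G₁ τ₁ h₁.1.1
    have eprod₂ : ((τ₂.map (List.cons true)).map (pAt (node2 p G₁ G₂))).prod = piT G₂ := by
      rw [map_map, show (pAt (node2 p G₁ G₂) ∘ List.cons true) = pAt G₂ from rfl]
      exact prod_map_pAt_perm G₂ τ₂ h₂.1.1
    have eval : valT (node2 p G₁ G₂) = p * lamT G₁ G₂ * (1 - piT G₁ * piT G₂) := rfl
    rcases hcase with rfl | rfl
    · have htand : (τ₁.map (List.cons false) ++ τ₂.map (List.cons true)).Nodup :=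
        (nodup_cons.mp hnd).2
      have hnm : ([] : List Bool) ∉ τ₁.map (List.cons false) ++ τ₂.map (List.cons true) := by
        simp
      rw [payoffD_cons _ _ _ _ hnm, payoffD_append _ _ _ _ htand,
        payoffD_map (node2 p G₁ G₂) G₁ false (fun l => rfl) _ τ₁ hτ₁nd,
        payoffD_map (node2 p G₁ G₂) G₂ true (fun l => rfl) _ τ₂ hτ₂nd,
        e₁, e₂, payoffD_smul, payoffD_smul, ih₁ hv₁ τ₁ h₁, ih₂ hv₂ τ₂ h₂,
        eprod₁, eval,
        show pAt (node2 p G₁ G₂) ([] : List Bool) = p from rfl,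
        show hide (node2 p G₁ G₂) ([] : List Bool) = 0 from rfl]
      field_simp
      ring
    · have htand : (τ₂.map (List.cons true) ++ τ₁.map (List.cons false)).Nodup :=
        (nodup_cons.mp hnd).2
      have hnm : ([] : List Bool) ∉ τ₂.map (List.cons true) ++ τ₁.map (List.cons false) := by
        simp
      rw [payoffD_cons _ _ _ _ hnm, payoffD_append _ _ _ _ htand,
        payoffD_map (node2 p G₁ G₂) G₁ false (fun l => rfl) _ τ₁ hτ₁nd,
        payoffD_map (node2 p G₁ G₂) G₂ true (fun l => rfl) _ τ₂ hτ₂nd,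
        e₁, e₂, payoffD_smul, payoffD_smul, ih₁ hv₁ τ₁ h₁, ih₂ hv₂ τ₂ h₂,
        eprod₂, eval,
        show pAt (node2 p G₁ G₂) ([] : List Bool) = p from rfl,
        show hide (node2 p G₁ G₂) ([] : List Bool) = 0 from rfl]
      field_simp
      ring
end RTree



open RTree in
/-- against the tree hiding strategy `h_G`, every depth-first expanding
search `σ` of `G` has expected payoff `P(h_G,σ) = V_G`. -/
theorem dfs_payoff_eq_value (G : RTree) (hG : G.valid)
    (σ : List (List Bool)) (hσ : IsDFS G σ) :
    payoffD G (hide G) σ = G.valT := by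
  exact payoff_main G hG σ hσ
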